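/- Let m ≥ 1 and n ≥ 2m be integers with n > n_0 and 3n_0 − n_0²/n ≤ 4m, where n_0 is defined from the prime factorization of n as in the context. Then for every vector y of the following set, J̃(n,m) ∪ {y} is an m-distance set: if m < n_0, the set of all vectors with n − n_0 + m coordinates equal to n_0/n and n_0 − m coordinates equal to −1 + n_0/n; if m = n_0, the single vector all of whose n coordinates equal m/n; if m > n_0, the set of all vectors with m − n_0 coordinates equal to 1 + n_0/n and n + n_0 − m coordinates equal to n_0/n. -/

import Mathlib

noncomputable section

/-- The set of distances between distinct points of `S`. -/
def distSet {n : ℕ} (S : Set (EuclideanSpace ℝ (Fin n))) : Set ℝ :=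
  {d | ∃ x ∈ S, ∃ y ∈ S, x ≠ y ∧ d = dist x y}

/-- `S` is an `s`-distance set: exactly `s` distances occur between distinct points. -/
def IsSDistanceSet {n : ℕ} (s : ℕ) (S : Set (EuclideanSpace ℝ (Fin n))) : Prop :=
  (distSet S).Finite ∧ (distSet S).ncard = s

/-- The representation `J̃(n,m)` of the Johnson graph `J(n,m)`: vectors with exactly `m`
coordinates equal to `1` and the rest equal to `0`. -/
def JohnsonRep (n m : ℕ) : Set (EuclideanSpace ℝ (Fin n)) :=
  {x | (∀ i, x i = 0 ∨ x i = 1) ∧ {i : Fin n | x i = 1}.ncard = m}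

/-- The hyperplane `H(n,m) = {x : ∑ x_i = m}`. -/
def Hyp (n m : ℕ) : Set (EuclideanSpace ℝ (Fin n)) :=
  {x | ∑ i, x i = (m : ℝ)}

/-- For `n = 2^{e₀} ∏ pᵢ^{eᵢ}` (pᵢ odd primes), `nzero n` is
`∏ pᵢ^{⌈eᵢ/2⌉}` if `e₀ = 0` and `2^{⌈(e₀+1)/2⌉} ∏ pᵢ^{⌈eᵢ/2⌉}` if `e₀ > 0`. -/
def nzero (n : ℕ) : ℕ :=
  ∏ p ∈ n.primeFactors,
    p ^ (if p = 2 then n.factorization p / 2 + 1 else (n.factorization p + 1) / 2)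

open Finset

/- ### Auxiliary lemmas -/

lemma aux_prod_pow_sq (s : Finset ℕ) (e f : ℕ → ℕ) (he : ∀ p ∈ s, e p ≤ 2 * f p) :
    (∏ p ∈ s, p ^ e p) * (∏ p ∈ s, p ^ (2 * f p - e p)) = (∏ p ∈ s, p ^ f p) ^ 2 := by
  rw [← Finset.prod_mul_distrib, ← Finset.prod_pow]
  refine Finset.prod_congr rfl fun p hp => ?_
  rw [← pow_add, ← pow_mul]
  congr 1
  have := he p hp
  omega

lemma aux_nzero_spec (n : ℕ) (hn : n ≠ 0) :
    ∃ q, n * q = (nzero n)^2 ∧ nzero n % 2 = q % 2 := by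
  set f : ℕ → ℕ := fun p => if p = 2 then n.factorization p / 2 + 1 else (n.factorization p + 1) / 2 with hf
  have hnz : nzero n = ∏ p ∈ n.primeFactors, p ^ f p := rfl
  have he : ∀ p ∈ n.primeFactors, n.factorization p ≤ 2 * f p := by
    intro p hp
    by_cases h : p = 2 <;> simp [hf, h] <;> omega
  refine ⟨∏ p ∈ n.primeFactors, p ^ (2 * f p - n.factorization p), ?_, ?_⟩
  · rw [hnz, ← aux_prod_pow_sq n.primeFactors n.factorization f he]
    congr 1
    conv_lhs => rw [← Nat.factorization_prod_pow_eq_self hn]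
    rw [Finsupp.prod, Nat.support_factorization]
  · by_cases h2 : 2 ∣ n
    · have h2m : 2 ∈ n.primeFactors := Nat.mem_primeFactors.2 ⟨Nat.prime_two, h2, hn⟩
      have he2 : 1 ≤ n.factorization 2 := (Nat.Prime.factorization_pos_of_dvd Nat.prime_two hn h2)
      have d1 : 2 ∣ nzero n := by
        rw [hnz]
        refine dvd_trans ?_ (Finset.dvd_prod_of_mem _ h2m)
        exact dvd_pow_self 2 (by simp [hf])
      have d2 : 2 ∣ ∏ p ∈ n.primeFactors, p ^ (2 * f p - n.factorization p) := by
        refine dvd_trans ?_ (Finset.dvd_prod_of_mem _ h2m)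
        refine dvd_pow_self 2 ?_
        simp only [hf, if_pos rfl]
        omega
      omega
    · have key : ∀ g : ℕ → ℕ, ¬ (2 ∣ ∏ p ∈ n.primeFactors, p ^ g p) := by
        intro g hdvd
        rw [Nat.prime_two.prime.dvd_finset_prod_iff] at hdvd
        obtain ⟨p, hp, hpd⟩ := hdvd
        have hpp := Nat.prime_of_mem_primeFactors hp
        have h2p : (2:ℕ) ∣ p := Nat.prime_two.prime.dvd_of_dvd_pow hpd
        have hp2 : p = 2 := ((Nat.prime_dvd_prime_iff_eq Nat.prime_two hpp).1 h2p).symm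
        exact h2 (hp2 ▸ Nat.dvd_of_mem_primeFactors hp)
      have d1 := key f
      have d2 := key (fun p => 2 * f p - n.factorization p)
      rw [← hnz] at d1
      omega

lemma aux_nzero_pos (n : ℕ) : 0 < nzero n :=
  Finset.prod_pos fun p hp => pow_pos (Nat.prime_of_mem_primeFactors hp).pos _

lemma aux_dist_eq_sqrt {n : ℕ} (x y : EuclideanSpace ℝ (Fin n)) :
    dist x y = Real.sqrt (∑ i, (x i - y i)^2) := by
  rw [EuclideanSpace.dist_eq]
  congr 1
  exact Finset.sum_congr rfl fun i _ => by rw [Real.dist_eq, sq_abs]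

lemma aux_ncard_eq_filter {n : ℕ} (x : EuclideanSpace ℝ (Fin n)) (v : ℝ) :
    {i : Fin n | x i = v}.ncard = (univ.filter fun i => x i = v).card := by
  classical
  rw [Set.ncard_eq_toFinset_card', Set.toFinset_setOf]

lemma aux_binary_sum_sq {n : ℕ} (x x' : EuclideanSpace ℝ (Fin n))
    (hx : ∀ i, x i = 0 ∨ x i = 1) (hx' : ∀ i, x' i = 0 ∨ x' i = 1) :
    ∑ i, (x i - x' i)^2 = ((univ : Finset (Fin n)).filter fun i => ¬ x i = x' i).card := by
  classical
  rw [← Finset.sum_boole]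
  refine Finset.sum_congr rfl fun i _ => ?_
  rcases hx i with h1 | h1 <;> rcases hx' i with h2 | h2 <;> simp [h1, h2]

lemma aux_sum_sq_split {n : ℕ} (x y : EuclideanSpace ℝ (Fin n)) (P : Finset (Fin n)) (v w : ℝ)
    (hx : ∀ i, x i = 0 ∨ x i = 1)
    (hP : ∀ i ∈ P, y i = v) (hQ : ∀ i ∉ P, y i = w) :
    ∑ i, (x i - y i)^2 =
      ((univ.filter fun i => x i = 1) ∩ P).card * (1 - v)^2
      + (P \ (univ.filter fun i => x i = 1)).card * v^2
      + ((univ.filter fun i => x i = 1) \ P).card * (1 - w)^2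
      + (univ \ ((univ.filter fun i => x i = 1) ∪ P)).card * w^2 := by
  classical
  set A := univ.filter fun i => x i = 1 with hA
  have hxA : ∀ i, (i ∈ A → x i = 1) ∧ (i ∉ A → x i = 0) := by
    intro i
    constructor
    · intro h; simpa [hA] using h
    · intro h; rcases hx i with h0 | h1
      · exact h0
      · exact absurd (by simp [hA, h1]) h
  have hpart : (univ : Finset (Fin n)) = ((A ∩ P) ∪ (P \ A)) ∪ ((A \ P) ∪ (univ \ (A ∪ P))) := by
    ext i
    simp only [mem_union, mem_inter, mem_sdiff, mem_univ, true_iff, true_and]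
    tauto
  have d1 : Disjoint (A ∩ P) (P \ A) := by
    simp [Finset.disjoint_left, Finset.mem_sdiff]; tauto
  have d2 : Disjoint (A \ P) (univ \ (A ∪ P)) := by
    simp [Finset.disjoint_left, Finset.mem_sdiff]; tauto
  have d3 : Disjoint ((A ∩ P) ∪ (P \ A)) ((A \ P) ∪ (univ \ (A ∪ P))) := by
    simp [Finset.disjoint_left, Finset.mem_sdiff]; tauto
  rw [hpart, Finset.sum_union d3, Finset.sum_union d1, Finset.sum_union d2]
  have e1 : ∑ i ∈ A ∩ P, (x i - y i)^2 = (A ∩ P).card * (1 - v)^2 := by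
    rw [Finset.sum_congr rfl (fun i hi => ?_), Finset.sum_const, nsmul_eq_mul]
    rw [(hxA i).1 (mem_inter.1 hi).1, hP i (mem_inter.1 hi).2]
  have e2 : ∑ i ∈ P \ A, (x i - y i)^2 = (P \ A).card * v^2 := by
    rw [Finset.sum_congr rfl (fun i hi => ?_), Finset.sum_const, nsmul_eq_mul]
    rw [(hxA i).2 (mem_sdiff.1 hi).2, hP i (mem_sdiff.1 hi).1]
    ring
  have e3 : ∑ i ∈ A \ P, (x i - y i)^2 = (A \ P).card * (1 - w)^2 := by
    rw [Finset.sum_congr rfl (fun i hi => ?_), Finset.sum_const, nsmul_eq_mul]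
    rw [(hxA i).1 (mem_sdiff.1 hi).1, hQ i (mem_sdiff.1 hi).2]
  have e4 : ∑ i ∈ univ \ (A ∪ P), (x i - y i)^2 = (univ \ (A ∪ P)).card * w^2 := by
    rw [Finset.sum_congr rfl (fun i hi => ?_), Finset.sum_const, nsmul_eq_mul]
    have hi' := mem_sdiff.1 hi
    rw [(hxA i).2 (fun h => hi'.2 (mem_union_left _ h)), hQ i (fun h => hi'.2 (mem_union_right _ h))]
    ring
  rw [e1, e2, e3, e4]
  rw [← hpart]
  ring

lemma aux_johnson_dist {n m : ℕ} (x x' : EuclideanSpace ℝ (Fin n))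
    (hx : x ∈ JohnsonRep n m) (hx' : x' ∈ JohnsonRep n m) (hne : x ≠ x') :
    ∃ k, 1 ≤ k ∧ k ≤ m ∧ dist x x' = Real.sqrt (2 * (k:ℝ)) := by
  classical
  obtain ⟨hx1, hx2⟩ := hx
  obtain ⟨hx'1, hx'2⟩ := hx'
  set A := univ.filter fun i => x i = 1 with hA
  set B := univ.filter fun i => x' i = 1 with hB
  have hAc : A.card = m := by rw [← aux_ncard_eq_filter x 1, hx2]
  have hBc : B.card = m := by rw [← aux_ncard_eq_filter x' 1, hx'2]
  have hD : (univ.filter fun i => ¬ x i = x' i) = (A \ B) ∪ (B \ A) := by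
    ext i
    simp only [mem_filter, mem_union, mem_sdiff, mem_univ, true_and, hA, hB]
    rcases hx1 i with h1 | h1 <;> rcases hx'1 i with h2 | h2 <;> simp [h1, h2]
  have hcap : (A ∩ B).card < m := by
    rcases Nat.lt_or_ge (A ∩ B).card m with h | h
    · exact h
    · exfalso
      have h1 : A ∩ B = A := Finset.eq_of_subset_of_card_le Finset.inter_subset_left (by omega)
      have h2 : A ∩ B = B := Finset.eq_of_subset_of_card_le Finset.inter_subset_right (by omega)
      apply hne
      ext i
      have hiff : i ∈ A ↔ i ∈ B := by rw [← h1, h2]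
      simp only [hA, hB, mem_filter, mem_univ, true_and] at hiff
      rcases hx1 i with g1 | g1 <;> rcases hx'1 i with g2 | g2 <;>
        simp [g1, g2] at hiff ⊢ <;> norm_num [hiff]
  refine ⟨m - (A ∩ B).card, by omega, by omega, ?_⟩
  rw [aux_dist_eq_sqrt, aux_binary_sum_sq x x' hx1 hx'1, hD]
  have hdisj : Disjoint (A \ B) (B \ A) := by
    simp [Finset.disjoint_left, Finset.mem_sdiff]; tauto
  rw [Finset.card_union_of_disjoint hdisj]
  have c1 : (A ∩ B).card + (A \ B).card = m := by rw [Finset.card_inter_add_card_sdiff, hAc]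
  have c2 : (B ∩ A).card + (B \ A).card = m := by rw [Finset.card_inter_add_card_sdiff, hBc]
  rw [Finset.inter_comm] at c2
  have hc : (A \ B).card + (B \ A).card = 2 * (m - (A ∩ B).card) := by omega
  congr 1
  rw [hc]
  push_cast
  ring

lemma aux_card_filter_val {n : ℕ} (q : Fin n → Prop) [DecidablePred q]
    (p : ℕ → Prop) [DecidablePred p] (h : ∀ i : Fin n, q i ↔ p i.val) :
    ((univ : Finset (Fin n)).filter q).card = ((Finset.range n).filter p).card := by
  rw [← Finset.card_attachFin ((Finset.range n).filter p)
    (fun j hj => Finset.mem_range.1 (Finset.mem_filter.1 hj).1)]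
  congr 1
  ext i
  simp [Finset.mem_attachFin, i.isLt, h i]

lemma aux_johnson_realize {n m : ℕ} (hm : 1 ≤ m) (hn : 2 * m ≤ n) (k : ℕ)
    (h1k : 1 ≤ k) (hkm : k ≤ m) :
    ∃ x x' : EuclideanSpace ℝ (Fin n), x ∈ JohnsonRep n m ∧ x' ∈ JohnsonRep n m ∧ x ≠ x' ∧
      dist x x' = Real.sqrt (2 * (k:ℝ)) := by
  classical
  set x : EuclideanSpace ℝ (Fin n) := WithLp.toLp 2 (fun i : Fin n => if i.val < m then (1:ℝ) else 0) with hxdef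
  set x' : EuclideanSpace ℝ (Fin n) :=
    WithLp.toLp 2 fun i : Fin n => if (k ≤ i.val ∧ i.val < m) ∨ (m ≤ i.val ∧ i.val < m + k) then 1 else 0 with hx'def
  have hx01 : ∀ i, x i = 0 ∨ x i = 1 := by
    intro i; by_cases h : i.val < m <;> simp [hxdef, h]
  have hx'01 : ∀ i, x' i = 0 ∨ x' i = 1 := by
    intro i
    by_cases h : (k ≤ i.val ∧ i.val < m) ∨ (m ≤ i.val ∧ i.val < m + k) <;> simp [hx'def, h]
  have hxm : {i : Fin n | x i = 1}.ncard = m := by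
    rw [aux_ncard_eq_filter,
      aux_card_filter_val _ (fun j => j < m) (fun i => by
        by_cases h : i.val < m <;> simp [hxdef, h])]
    have h2 : (Finset.range n).filter (fun j => j < m) = Finset.range m := by
      ext j; simp only [Finset.mem_filter, Finset.mem_range]; omega
    rw [h2, Finset.card_range]
  have hx'm : {i : Fin n | x' i = 1}.ncard = m := by
    rw [aux_ncard_eq_filter,
      aux_card_filter_val _ (fun j => (k ≤ j ∧ j < m) ∨ (m ≤ j ∧ j < m + k)) (fun i => by
        by_cases h : (k ≤ i.val ∧ i.val < m) ∨ (m ≤ i.val ∧ i.val < m + k) <;>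
          simp [hx'def, h])]
    have h2 : (Finset.range n).filter (fun j => (k ≤ j ∧ j < m) ∨ (m ≤ j ∧ j < m + k))
        = Finset.Ico k (m + k) := by
      ext j; simp only [Finset.mem_filter, Finset.mem_range, Finset.mem_Ico]; omega
    rw [h2, Nat.card_Ico]
    omega
  have hne : x ≠ x' := by
    intro h
    have := congrArg (fun v : EuclideanSpace ℝ (Fin n) => v (⟨0, by omega⟩ : Fin n)) h
    simp only [hxdef, hx'def, PiLp.toLp_apply] at this
    rw [if_pos (by omega), if_neg (by omega)] at this
    norm_num at this
  refine ⟨x, x', ⟨hx01, hxm⟩, ⟨hx'01, hx'm⟩, hne, ?_⟩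
  rw [aux_dist_eq_sqrt, aux_binary_sum_sq x x' hx01 hx'01]
  rw [aux_card_filter_val _ (fun j => j < k ∨ (m ≤ j ∧ j < m + k)) (fun i => by
    simp only [hxdef, hx'def]
    by_cases hc1 : i.val < m <;>
      by_cases hc2 : (k ≤ i.val ∧ i.val < m) ∨ (m ≤ i.val ∧ i.val < m + k)
    · rw [if_pos hc1, if_pos hc2]; norm_num; omega
    · rw [if_pos hc1, if_neg hc2]; norm_num; omega
    · rw [if_neg hc1, if_pos hc2]; norm_num; omega
    · rw [if_neg hc1, if_neg hc2]; norm_num; omega)]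
  have h2 : (Finset.range n).filter (fun j => j < k ∨ (m ≤ j ∧ j < m + k))
      = Finset.range k ∪ Finset.Ico m (m + k) := by
    ext j
    simp only [Finset.mem_filter, Finset.mem_range, Finset.mem_union, Finset.mem_Ico]
    omega
  rw [h2, Finset.card_union_of_disjoint (Finset.disjoint_left.2 (by
    intro a ha hb
    simp only [Finset.mem_range] at ha
    simp only [Finset.mem_Ico] at hb
    omega))]
  rw [Finset.card_range, Nat.card_Ico]
  congr 1
  have h3 : k + (m + k - m) = 2 * k := by omega
  rw [h3]
  push_cast
  ring

lemma aux_dist_to_y {n m : ℕ} (x y : EuclideanSpace ℝ (Fin n))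
    (hx01 : ∀ i, x i = 0 ∨ x i = 1)
    (hxm : ((univ : Finset (Fin n)).filter fun i => x i = 1).card = m)
    (P : Finset (Fin n)) (v w : ℝ) (hP : ∀ i ∈ P, y i = v) (hQ : ∀ i ∉ P, y i = w) :
    ∃ t : ℕ, t ≤ m ∧ t ≤ P.card ∧ m + P.card - t ≤ n ∧
      dist x y = Real.sqrt ((t:ℝ)*(1-v)^2 + ((P.card:ℝ)-t)*v^2 + ((m:ℝ)-t)*(1-w)^2
        + ((n:ℝ)-((m:ℝ)+P.card-t))*w^2) := by
  classical
  set A := univ.filter fun i => x i = 1 with hA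
  refine ⟨(A ∩ P).card, hxm ▸ Finset.card_le_card Finset.inter_subset_left,
    Finset.card_le_card Finset.inter_subset_right, ?_, ?_⟩
  · have h1 : (A ∪ P).card + (A ∩ P).card = A.card + P.card := Finset.card_union_add_card_inter A P
    have h2 : (A ∪ P).card ≤ n := by
      have := Finset.card_le_univ (A ∪ P)
      simpa using this
    omega
  · rw [aux_dist_eq_sqrt, aux_sum_sq_split x y P v w hx01 hP hQ]
    congr 1
    have hPA : (P \ A).card = P.card - (A ∩ P).card := by
      have := Finset.card_inter_add_card_sdiff P A
      rw [Finset.inter_comm] at this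
      omega
    have hAP : (A \ P).card = m - (A ∩ P).card := by
      have := Finset.card_inter_add_card_sdiff A P
      omega
    have hU : (univ \ (A ∪ P)).card = n - ((A ∪ P)).card := by
      rw [Finset.card_sdiff_of_subset (Finset.subset_univ _)]
      simp
    have hAUP : (A ∪ P).card = m + P.card - (A ∩ P).card := by
      have := Finset.card_union_add_card_inter A P
      omega
    have ht1 : (A ∩ P).card ≤ m := hxm ▸ Finset.card_le_card Finset.inter_subset_left
    have ht2 : (A ∩ P).card ≤ P.card := Finset.card_le_card Finset.inter_subset_right
    have hUn : (A ∪ P).card ≤ n := by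
      have := Finset.card_le_univ (A ∪ P)
      simpa using this
    have e2 : ((P \ A).card : ℝ) = (P.card : ℝ) - (A ∩ P).card := by
      rw [hPA, Nat.cast_sub ht2]
    have e3 : ((A \ P).card : ℝ) = (m : ℝ) - (A ∩ P).card := by
      rw [hAP, Nat.cast_sub ht1]
    have e4 : ((univ \ (A ∪ P)).card : ℝ) = (n : ℝ) - ((m:ℝ) + P.card - (A ∩ P).card) := by
      rw [hU, Nat.cast_sub hUn, hAUP, Nat.cast_sub (by omega)]
      push_cast
      ring
    rw [e2, e3, e4, ← hA]

lemma aux_case_arith1 (n N0 q t m a c : ℝ) (hN0 : N0 = n * c) (hqc : q = n * c^2)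
    (ha : N0 = q + 2*a) :
    t*(1-(-1+c))^2 + ((N0-m)-t)*(-1+c)^2 + (m-t)*(1-c)^2 + (n-(m+(N0-m)-t))*c^2
      = 2*(a+t) := by
  linear_combination hqc - 2*c*hN0 + ha

lemma aux_case_arith3 (n N0 q t m a c : ℝ) (hN0 : N0 = n * c) (hqc : q = n * c^2)
    (ha : N0 = q + 2*a) :
    t*(1-(1+c))^2 + ((m-N0)-t)*(1+c)^2 + (m-t)*(1-c)^2 + (n-(m+(m-N0)-t))*c^2
      = 2*(m - q - a - t) := by
  linear_combination hqc - 2*c*hN0 - ha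

lemma aux_case_arith2 (n N0 q a c : ℝ) (hN0 : N0 = n * c) (hqc : q = n * c^2)
    (ha : N0 = q + 2*a) :
    N0*(1-c)^2 + (n-N0)*c^2 = 2*a := by
  linear_combination hqc - 2*c*hN0 + ha
theorem add_vector_of_cond (n m : ℕ) (hm : 1 ≤ m) (hn : 2 * m ≤ n)
    (h1 : nzero n < n)
    (h2 : 3 * (nzero n : ℝ) - (nzero n : ℝ) ^ 2 / n ≤ 4 * m)
    (y : EuclideanSpace ℝ (Fin n))
    (hy :
      (m < nzero n ∧
        {i : Fin n | y i = (nzero n : ℝ) / n}.ncard = n - nzero n + m ∧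
        {i : Fin n | y i = -1 + (nzero n : ℝ) / n}.ncard = nzero n - m) ∨
      (m = nzero n ∧ ∀ i, y i = (m : ℝ) / n) ∨
      (nzero n < m ∧
        {i : Fin n | y i = 1 + (nzero n : ℝ) / n}.ncard = m - nzero n ∧
        {i : Fin n | y i = (nzero n : ℝ) / n}.ncard = n + nzero n - m)) :
    IsSDistanceSet m (JohnsonRep n m ∪ {y}) := by
  classical
  have hn0 : n ≠ 0 := by omega
  set N0 := nzero n with hN0def
  obtain ⟨q, hq, hpar⟩ := aux_nzero_spec n hn0
  have hN0pos : 0 < N0 := aux_nzero_pos n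
  have hqlt : q < N0 := by nlinarith [hq, h1, hN0pos]
  obtain ⟨a, haa, ha1⟩ : ∃ a, N0 = q + 2*a ∧ 1 ≤ a := ⟨(N0 - q)/2, by omega, by omega⟩
  have hnR : (n:ℝ) ≠ 0 := Nat.cast_ne_zero.2 hn0
  have hqR : (n:ℝ) * q = (N0:ℝ)^2 := by exact_mod_cast congrArg (Nat.cast : ℕ → ℝ) hq
  have hN0c : (N0:ℝ) = (n:ℝ) * ((N0:ℝ)/(n:ℝ)) := by field_simp
  have hqc : (q:ℝ) = (n:ℝ) * ((N0:ℝ)/(n:ℝ))^2 := by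
    field_simp
    linear_combination hqR
  have haR : (N0:ℝ) = (q:ℝ) + 2*(a:ℝ) := by exact_mod_cast haa
  have hN2 : (N0:ℝ)^2/(n:ℝ) = (q:ℝ) := by
    rw [← hqR]
    field_simp
  have h2' : 3*N0 ≤ 4*m + q := by
    rw [hN2] at h2
    have : (3*N0 : ℝ) ≤ 4*m + q := by push_cast; linarith
    exact_mod_cast this
  have key : q + 3*a ≤ 2*m := by omega
  -- distances from y to Johnson points
  have ydist : ∀ x ∈ JohnsonRep n m, ∃ k, 1 ≤ k ∧ k ≤ m ∧
      dist x y = Real.sqrt (2*(k:ℝ)) := by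
    intro x hx
    obtain ⟨hx01, hxm'⟩ := hx
    have hxm : ((univ : Finset (Fin n)).filter fun i => x i = 1).card = m := by
      rw [← aux_ncard_eq_filter x 1, hxm']
    rcases hy with ⟨hlt, hc1, hc2⟩ | ⟨heq, hval⟩ | ⟨hgt, hc1, hc2⟩
    · -- m < N0
      set P := univ.filter (fun i => y i = -1 + (N0:ℝ)/n) with hPdef
      have hPcard : P.card = N0 - m := by
        rw [hPdef, ← aux_ncard_eq_filter y (-1 + (N0:ℝ)/n), hc2]
      set Q := univ.filter (fun i => y i = (N0:ℝ)/n) with hQdef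
      have hQcard : Q.card = n - N0 + m := by
        rw [hQdef, ← aux_ncard_eq_filter y ((N0:ℝ)/n), hc1]
      have hdisj : Disjoint P Q := by
        rw [Finset.disjoint_left]
        intro i hiP hiQ
        rw [hPdef, mem_filter] at hiP
        rw [hQdef, mem_filter] at hiQ
        have := hiP.2.symm.trans hiQ.2
        linarith [this]
      have huniv : P ∪ Q = univ := by
        apply Finset.eq_univ_of_card
        rw [Finset.card_union_of_disjoint hdisj, hPcard, hQcard, Fintype.card_fin]
        omega
      have hQy : ∀ i ∉ P, y i = (N0:ℝ)/n := by
        intro i hi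
        have hiu : i ∈ P ∪ Q := huniv ▸ mem_univ i
        rcases mem_union.1 hiu with h | h
        · exact absurd h hi
        · exact (mem_filter.1 h).2
      have hPy : ∀ i ∈ P, y i = -1 + (N0:ℝ)/n := fun i hi => (mem_filter.1 hi).2
      obtain ⟨t, ht1, ht2, ht3, hd⟩ := aux_dist_to_y x y hx01 hxm P _ _ hPy hQy
      rw [hPcard] at ht2 hd
      refine ⟨a + t, by omega, by omega, ?_⟩
      rw [hd]
      congr 1
      have hPc : ((N0 - m : ℕ) : ℝ) = (N0:ℝ) - m := Nat.cast_sub (le_of_lt hlt)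
      rw [hPc, Nat.cast_add]
      exact aux_case_arith1 n N0 q t m a ((N0:ℝ)/(n:ℝ)) hN0c hqc haR
    · -- m = N0
      have hval' : ∀ i, y i = (N0:ℝ)/n := by
        intro i
        rw [hval i, heq]
      obtain ⟨t, ht1, ht2, ht3, hd⟩ :=
        aux_dist_to_y x y hx01 hxm (∅ : Finset (Fin n)) 0 ((N0:ℝ)/n)
          (by simp) (fun i _ => hval' i)
      have ht0 : t = 0 := by simpa using ht2
      subst ht0
      refine ⟨a, ha1, by omega, ?_⟩
      rw [hd]
      congr 1
      simp only [Finset.card_empty, Nat.cast_zero]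
      have := aux_case_arith2 n N0 q a ((N0:ℝ)/(n:ℝ)) hN0c hqc haR
      have hmN0 : (m:ℝ) = (N0:ℝ) := by exact_mod_cast heq
      rw [hmN0]
      linear_combination this
    · -- N0 < m
      set P := univ.filter (fun i => y i = 1 + (N0:ℝ)/n) with hPdef
      have hPcard : P.card = m - N0 := by
        rw [hPdef, ← aux_ncard_eq_filter y (1 + (N0:ℝ)/n), hc1]
      set Q := univ.filter (fun i => y i = (N0:ℝ)/n) with hQdef
      have hQcard : Q.card = n + N0 - m := by
        rw [hQdef, ← aux_ncard_eq_filter y ((N0:ℝ)/n), hc2]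
      have hdisj : Disjoint P Q := by
        rw [Finset.disjoint_left]
        intro i hiP hiQ
        rw [hPdef, mem_filter] at hiP
        rw [hQdef, mem_filter] at hiQ
        have := hiP.2.symm.trans hiQ.2
        linarith [this]
      have huniv : P ∪ Q = univ := by
        apply Finset.eq_univ_of_card
        rw [Finset.card_union_of_disjoint hdisj, hPcard, hQcard, Fintype.card_fin]
        omega
      have hQy : ∀ i ∉ P, y i = (N0:ℝ)/n := by
        intro i hi
        have hiu : i ∈ P ∪ Q := huniv ▸ mem_univ i
        rcases mem_union.1 hiu with h | h
        · exact absurd h hi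
        · exact (mem_filter.1 h).2
      have hPy : ∀ i ∈ P, y i = 1 + (N0:ℝ)/n := fun i hi => (mem_filter.1 hi).2
      obtain ⟨t, ht1, ht2, ht3, hd⟩ := aux_dist_to_y x y hx01 hxm P _ _ hPy hQy
      rw [hPcard] at ht2 hd
      refine ⟨m - (q + a + t), by omega, by omega, ?_⟩
      rw [hd]
      congr 1
      have hPc : ((m - N0 : ℕ) : ℝ) = (m:ℝ) - N0 := Nat.cast_sub (le_of_lt hgt)
      have hkc : ((m - (q + a + t) : ℕ) : ℝ) = (m:ℝ) - q - a - t := by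
        rw [Nat.cast_sub (by omega)]
        push_cast
        ring
      rw [hPc, hkc]
      exact aux_case_arith3 n N0 q t m a ((N0:ℝ)/(n:ℝ)) hN0c hqc haR
  -- the set of distances
  have hT : distSet (JohnsonRep n m ∪ {y})
      = (fun k : ℕ => Real.sqrt (2*(k:ℝ))) '' (Set.Icc 1 m) := by
    apply Set.Subset.antisymm
    · rintro d ⟨u, hu, w, hw, hne, rfl⟩
      rcases hu with hu | hu <;> rcases hw with hw | hw
      · obtain ⟨k, h1k, hkm, hd⟩ := aux_johnson_dist u w hu hw hne
        exact ⟨k, ⟨h1k, hkm⟩, hd.symm⟩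
      · rw [Set.mem_singleton_iff] at hw
        subst hw
        obtain ⟨k, h1k, hkm, hd⟩ := ydist u hu
        exact ⟨k, ⟨h1k, hkm⟩, hd.symm⟩
      · rw [Set.mem_singleton_iff] at hu
        subst hu
        obtain ⟨k, h1k, hkm, hd⟩ := ydist w hw
        refine ⟨k, ⟨h1k, hkm⟩, ?_⟩
        rw [dist_comm] at hd
        exact hd.symm
      · rw [Set.mem_singleton_iff] at hu hw
        exact absurd (hu.trans hw.symm) hne
    · rintro d ⟨k, ⟨h1k, hkm⟩, rfl⟩
      obtain ⟨x, x', hx, hx', hne, hd⟩ := aux_johnson_realize hm hn k h1k hkm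
      exact ⟨x, Or.inl hx, x', Or.inl hx', hne, hd.symm⟩
  constructor
  · rw [hT]
    exact (Set.finite_Icc 1 m).image _
  · rw [hT, Set.ncard_image_of_injOn, ← Finset.coe_Icc, Set.ncard_coe_finset, Nat.card_Icc]
    · omega
    · intro k1 _ k2 _ hk
      have h1' : (0:ℝ) ≤ 2*(k1:ℝ) := by positivity
      have h2'' : (0:ℝ) ≤ 2*(k2:ℝ) := by positivity
      have h3 := (Real.sqrt_inj h1' h2'').1 hk
      have h4 : (k1:ℝ) = k2 := by linarith
      exact_mod_cast h4
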